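/- Let a maintenance instance on a graph be given, let t_1 < … < t_ℓ be the distinct values of d_e − p_e over e ∈ E, and set t_0 = 0 and t_{ℓ+1} = T. For i ∈ {1,…,ℓ+1} let S_i be the non-preemptive schedule that starts every edge e with d_e − p_e ≥ t_i at time d_e − p_e and every other edge at time r_e. Then every feasible non-preemptive schedule has total connectivity time at most (ℓ+1) · max_{i=1,…,ℓ+1} (total connectivity time of S_i). (This is the (ℓ+1)-approximation guarantee for non-preemptive MAXCONNECTIVITY.) -/

import Mathlib

open MeasureTheory Set
open scoped ENNReal

/-- Feasibility of a non-preemptive schedule: each edge `e` starts its maintenance at time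
`σ e` with `r e ≤ σ e` and `σ e + p e ≤ d e`; it is maintained during `[σ e, σ e + p e]`. -/
def NonpreemptFeasible {V : Type*} (G : SimpleGraph V) (r d p : Sym2 V → ℝ)
    (σ : Sym2 V → ℝ) : Prop :=
  ∀ e ∈ G.edgeSet, r e ≤ σ e ∧ σ e + p e ≤ d e

/-- The network is connected at time `t` under the non-preemptive schedule `σ`:
`sp` and `sm` are joined by a path of edges not maintained at `t`. -/
def ConnAt {V : Type*} (G : SimpleGraph V) (sp sm : V) (p : Sym2 V → ℝ)
    (σ : Sym2 V → ℝ) (t : ℝ) : Prop :=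
  (G.deleteEdges {e | t ∈ Set.Icc (σ e) (σ e + p e)}).Reachable sp sm

/-- The schedule `Sᵢ` of the approximation algorithm (for a threshold time `θ`):
every edge `e` with latest start time `d e - p e ≥ θ` starts at `d e - p e`,
and every other edge starts at its release date `r e`. -/
noncomputable def greedySchedule {V : Type*} (_G : SimpleGraph V) (r d p : Sym2 V → ℝ)
    (θ : ℝ) : Sym2 V → ℝ :=
  fun e => if θ ≤ d e - p e then d e - p e else r e

/-- The threshold times `t₁, …, t_ℓ, t_{ℓ+1} = T`. -/
def threshPts {ℓ : ℕ} (m : Fin ℓ → ℝ) (T : ℝ) : Fin (ℓ + 1) → ℝ :=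
  Fin.snoc m T

/-- The full grid of time points `t₀ = 0, t₁, …, t_ℓ, t_{ℓ+1} = T`. -/
def gridPts {ℓ : ℕ} (m : Fin ℓ → ℝ) (T : ℝ) : Fin (ℓ + 2) → ℝ :=
  Fin.cons 0 (threshPts m T)

/-- Monotonicity of connectivity: if every edge maintained at `t` under `τ` is also
maintained at `t` under `σ`, then connectivity under `σ` implies connectivity under `τ`. -/
lemma ConnAt_of_maint_subset {V : Type*} (G : SimpleGraph V) (sp sm : V)
    (p σ τ : Sym2 V → ℝ) (t : ℝ)
    (h : ∀ e ∈ G.edgeSet, t ∈ Set.Icc (τ e) (τ e + p e) → t ∈ Set.Icc (σ e) (σ e + p e))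
    (hc : ConnAt G sp sm p σ t) : ConnAt G sp sm p τ t := by
  refine hc.mono ?_
  intro a b hab
  rw [SimpleGraph.deleteEdges_adj] at hab ⊢
  refine ⟨hab.1, fun hmem => hab.2 ?_⟩
  exact h _ ((SimpleGraph.mem_edgeSet G).mpr hab.1) hmem

/-- **Theorem 5 (the (ℓ+1)-approximation guarantee for non-preemptive MAXCONNECTIVITY).**
Let `t₁ < ⋯ < t_ℓ` (`m 0 < ⋯ < m (ℓ-1)`) be the distinct latest start times `d e - p e`,
`t₀ = 0`, `t_{ℓ+1} = T`, and for `i ∈ {1, …, ℓ+1}` let `Sᵢ` be the schedule starting every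
edge with `d e - p e ≥ tᵢ` at `d e - p e` and every other edge at `r e`. Then every feasible
non-preemptive schedule has total connectivity time at most `(ℓ+1)` times the maximum of the
total connectivity times of the schedules `Sᵢ`. -/
theorem greedy_approximation {V : Type*} [Fintype V]
    (G : SimpleGraph V) (sp sm : V) (r d p : Sym2 V → ℝ)
    (hr : ∀ e ∈ G.edgeSet, 0 ≤ r e)
    (hp : ∀ e ∈ G.edgeSet, 0 ≤ p e)
    (hrd : ∀ e ∈ G.edgeSet, r e + p e ≤ d e)
    {ℓ : ℕ} (m : Fin ℓ → ℝ) (hm : StrictMono m)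
    (hmrange : Set.range m = {τ : ℝ | ∃ e ∈ G.edgeSet, d e - p e = τ})
    (T : ℝ) (hT : IsGreatest {τ : ℝ | ∃ e ∈ G.edgeSet, d e = τ} T)
    (σ : Sym2 V → ℝ) (hσ : NonpreemptFeasible G r d p σ) :
    volume {t ∈ Set.Icc 0 T | ConnAt G sp sm p σ t} ≤
      (ℓ + 1 : ℝ≥0∞) * ⨆ i : Fin (ℓ + 1),
        volume {t ∈ Set.Icc 0 T |
          ConnAt G sp sm p (greedySchedule G r d p (threshPts m T i)) t} := by
  classical
  have hTnn : 0 ≤ T := by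
    obtain ⟨⟨e, he, rfl⟩, -⟩ := hT
    have h1 := hr e he; have h2 := hp e he; have h3 := hrd e he; linarith
  have hmem : ∀ j : Fin ℓ, ∃ e ∈ G.edgeSet, d e - p e = m j := by
    intro j
    have : m j ∈ Set.range m := ⟨j, rfl⟩
    rw [hmrange] at this; exact this
  have hm0 : ∀ j, 0 ≤ m j := by
    intro j; obtain ⟨e, he, h⟩ := hmem j
    have h1 := hr e he; have h3 := hrd e he; linarith
  have hmT : ∀ j, m j ≤ T := by
    intro j; obtain ⟨e, he, h⟩ := hmem j
    have h1 := hT.2 ⟨e, he, rfl⟩; have h2 := hp e he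
    linarith
  -- computing thresholds
  have thresh_lt : ∀ (k : ℕ) (hk : k < ℓ) (i : Fin (ℓ + 1)), (i : ℕ) = k →
      threshPts m T i = m ⟨k, hk⟩ := by
    intro k hk i hik
    have hi : i = Fin.castSucc ⟨k, hk⟩ := by ext; simpa using hik
    rw [hi]; exact @Fin.snoc_castSucc ℓ (fun _ => ℝ) T m ⟨k, hk⟩
  have thresh_last : ∀ (i : Fin (ℓ + 1)), (i : ℕ) = ℓ → threshPts m T i = T := by
    intro i h
    have hi : i = Fin.last ℓ := by ext; simpa using h
    rw [hi]; simp [threshPts]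
  have thresh_nonneg : ∀ i : Fin (ℓ + 1), 0 ≤ threshPts m T i := by
    intro i
    by_cases h : (i : ℕ) < ℓ
    · rw [thresh_lt _ h i rfl]; exact hm0 _
    · rw [thresh_last i (by omega)]; exact hTnn
  have thresh_le_T : ∀ i : Fin (ℓ + 1), threshPts m T i ≤ T := by
    intro i
    by_cases h : (i : ℕ) < ℓ
    · rw [thresh_lt _ h i rfl]; exact hmT _
    · rw [thresh_last i (by omega)]
  -- computing grid points
  have grid_zero : gridPts m T 0 = 0 := by
    simp [gridPts]
  have grid_succ : ∀ j : Fin (ℓ + 1), gridPts m T j.succ = threshPts m T j := by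
    intro j; simp [gridPts]
  have grid_cast : ∀ (i : Fin (ℓ + 1)) (h : 1 ≤ (i : ℕ)),
      gridPts m T i.castSucc = threshPts m T ⟨(i : ℕ) - 1, by omega⟩ := by
    intro i h
    have hi : i.castSucc = Fin.succ ⟨(i : ℕ) - 1, by omega⟩ := by
      ext; simp; omega
    rw [hi, grid_succ]
  have grid_nonneg : ∀ i : Fin (ℓ + 1), 0 ≤ gridPts m T i.castSucc := by
    intro i
    by_cases h : 1 ≤ (i : ℕ)
    · rw [grid_cast i h]; exact thresh_nonneg _
    · have hi : i.castSucc = 0 := by rw [Fin.ext_iff, Fin.coe_castSucc, Fin.val_zero]; omega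
      rw [hi, grid_zero]
  -- key lemma A: below the threshold means at most the previous grid point
  have keyA : ∀ (i : Fin (ℓ + 1)) (e : Sym2 V), e ∈ G.edgeSet →
      d e - p e < threshPts m T i → d e - p e ≤ gridPts m T i.castSucc := by
    intro i e he hlt
    have hmem' : d e - p e ∈ Set.range m := by rw [hmrange]; exact ⟨e, he, rfl⟩
    obtain ⟨j, hj⟩ := hmem'
    by_cases hi : (i : ℕ) < ℓ
    · rw [thresh_lt _ hi i rfl] at hlt
      have hjlt : (j : ℕ) < (i : ℕ) := by
        have hmm : m j < m ⟨(i : ℕ), hi⟩ := by rw [hj]; exact hlt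
        have := hm.lt_iff_lt.mp hmm
        simpa [Fin.lt_def] using this
      have h1 : 1 ≤ (i : ℕ) := by omega
      rw [grid_cast i h1, thresh_lt ((i : ℕ) - 1) (by omega) _ rfl]
      rw [← hj]
      exact hm.monotone (by simp only [Fin.le_def]; omega)
    · have hℓpos : 0 < ℓ := j.pos
      have h1 : 1 ≤ (i : ℕ) := by omega
      have hiℓ : (i : ℕ) = ℓ := by omega
      rw [grid_cast i h1, thresh_lt ((i : ℕ) - 1) (by omega) _ rfl]
      rw [← hj]
      refine hm.monotone ?_
      simp only [Fin.le_def]; omega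
  -- covering lemma
  have cover : ∀ t ∈ Set.Icc (0 : ℝ) T, ∃ i : Fin (ℓ + 1),
      gridPts m T i.castSucc ≤ t ∧ t ≤ threshPts m T i := by
    intro t ht
    set S : Finset (Fin (ℓ + 1)) :=
      Finset.univ.filter (fun j => gridPts m T j.castSucc ≤ t) with hS
    have h0S : (0 : Fin (ℓ + 1)) ∈ S := by
      have : (0 : Fin (ℓ + 1)).castSucc = 0 := by ext; simp
      simp [hS, this, grid_zero, ht.1]
    have hSne : S.Nonempty := ⟨0, h0S⟩
    refine ⟨S.max' hSne, ?_, ?_⟩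
    · have := S.max'_mem hSne
      simpa [hS] using this
    · by_cases hlt : ((S.max' hSne : Fin (ℓ + 1)) : ℕ) < ℓ
      · have hnot : (⟨((S.max' hSne : Fin (ℓ + 1)) : ℕ) + 1, by omega⟩ : Fin (ℓ + 1)) ∉ S := by
          intro hmem'
          have hle := S.le_max' _ hmem'
          simp only [Fin.le_def] at hle
          omega
        have hcast : (⟨((S.max' hSne : Fin (ℓ + 1)) : ℕ) + 1, by omega⟩ :
            Fin (ℓ + 1)).castSucc = Fin.succ (S.max' hSne) := by
          ext; simp
        simp only [hS, Finset.mem_filter, Finset.mem_univ, true_and, hcast,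
          grid_succ, not_le] at hnot
        exact hnot.le
      · rw [thresh_last (S.max' hSne) (by omega)]; exact ht.2
  -- key lemma B: connectivity on an open grid interval transfers to the greedy schedule
  have keyB : ∀ i : Fin (ℓ + 1),
      {t ∈ Set.Ioo (gridPts m T i.castSucc) (threshPts m T i) | ConnAt G sp sm p σ t} ⊆
      {t ∈ Set.Icc 0 T |
        ConnAt G sp sm p (greedySchedule G r d p (threshPts m T i)) t} := by
    intro i t ht
    obtain ⟨⟨htl, htr⟩, hconn⟩ := ht
    constructor
    · exact ⟨le_of_lt (lt_of_le_of_lt (grid_nonneg i) htl),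
        le_of_lt (lt_of_lt_of_le htr (thresh_le_T i))⟩
    · refine ConnAt_of_maint_subset G sp sm p σ _ t ?_ hconn
      intro e he hme
      obtain ⟨hσ1, hσ2⟩ := hσ e he
      by_cases hθ : threshPts m T i ≤ d e - p e
      · simp only [greedySchedule, if_pos hθ, Set.mem_Icc] at hme
        exfalso; linarith [hme.1]
      · push_neg at hθ
        have hle := keyA i e he hθ
        simp only [greedySchedule, if_neg (not_le.mpr hθ), Set.mem_Icc] at hme
        constructor
        · linarith [hme.1]
        · linarith [hme.2]
  -- assembling the measure estimate
  have cover2 : {t ∈ Set.Icc 0 T | ConnAt G sp sm p σ t} ⊆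
      ⋃ i : Fin (ℓ + 1),
        (({gridPts m T i.castSucc, threshPts m T i} : Set ℝ) ∪
          {t ∈ Set.Ioo (gridPts m T i.castSucc) (threshPts m T i) |
            ConnAt G sp sm p σ t}) := by
    intro t ht
    obtain ⟨ht1, hc⟩ := ht
    obtain ⟨i, h1, h2⟩ := cover t ht1
    refine Set.mem_iUnion.mpr ⟨i, ?_⟩
    by_cases he1 : t = gridPts m T i.castSucc
    · exact Or.inl (Or.inl he1)
    by_cases he2 : t = threshPts m T i
    · exact Or.inl (Or.inr he2)
    · exact Or.inr ⟨⟨lt_of_le_of_ne h1 (Ne.symm he1), lt_of_le_of_ne h2 he2⟩, hc⟩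
  calc volume {t ∈ Set.Icc 0 T | ConnAt G sp sm p σ t}
      ≤ ∑' i : Fin (ℓ + 1), volume
          (({gridPts m T i.castSucc, threshPts m T i} : Set ℝ) ∪
            {t ∈ Set.Ioo (gridPts m T i.castSucc) (threshPts m T i) |
              ConnAt G sp sm p σ t}) :=
        (measure_mono cover2).trans (measure_iUnion_le _)
    _ ≤ ∑' i : Fin (ℓ + 1), volume
          {t ∈ Set.Icc 0 T |
            ConnAt G sp sm p (greedySchedule G r d p (threshPts m T i)) t} := by
        refine ENNReal.tsum_le_tsum fun i => ?_
        calc volume (({gridPts m T i.castSucc, threshPts m T i} : Set ℝ) ∪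
              {t ∈ Set.Ioo (gridPts m T i.castSucc) (threshPts m T i) |
                ConnAt G sp sm p σ t})
            ≤ volume ({gridPts m T i.castSucc, threshPts m T i} : Set ℝ) +
              volume {t ∈ Set.Ioo (gridPts m T i.castSucc) (threshPts m T i) |
                ConnAt G sp sm p σ t} := measure_union_le _ _
          _ = volume {t ∈ Set.Ioo (gridPts m T i.castSucc) (threshPts m T i) |
                ConnAt G sp sm p σ t} := by
              rw [Set.Finite.measure_zero (Set.toFinite _) volume, zero_add]
          _ ≤ _ := measure_mono (keyB i)
    _ ≤ ∑' _i : Fin (ℓ + 1), ⨆ i : Fin (ℓ + 1), volume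
          {t ∈ Set.Icc 0 T |
            ConnAt G sp sm p (greedySchedule G r d p (threshPts m T i)) t} :=
        ENNReal.tsum_le_tsum fun i =>
          le_iSup (fun j : Fin (ℓ + 1) => volume
            {t ∈ Set.Icc 0 T |
              ConnAt G sp sm p (greedySchedule G r d p (threshPts m T j)) t}) i
    _ = (ℓ + 1 : ℝ≥0∞) * ⨆ i : Fin (ℓ + 1), volume
          {t ∈ Set.Icc 0 T |
            ConnAt G sp sm p (greedySchedule G r d p (threshPts m T i)) t} := by
        rw [tsum_fintype]
        simp [Finset.sum_const, nsmul_eq_mul]
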